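/- Let λ : ℝ² → ℝ be continuous and G, L > 0. Suppose u : ℝ² → ℝ is continuous, and (γ_k) is a sequence of curves γ_k : [a,b] → ℝ with γ_k(t₀) = x₀, each satisfying γ_k'(s) = λ_k(s, γ_k(s)) where λ_k = f'(u_k) for continuous u_k → u uniformly with f ∈ C², and such that t ↦ u_k(t, γ_k(t)) is G-Lipschitz. If γ_k → γ uniformly, then γ satisfies γ'(s) = f'(u(s, γ(s))) and t ↦ u(t, γ(t)) is G-Lipschitz continuous. -/

import Mathlib

open Set Filter Topology intervalIntegral

/-- Stability of characteristics with Lipschitz values: if `u_k → u` locally uniformly,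
`γ_k` are characteristics of `u_k` (in integral form, with speed `f'(u_k)`) through
`(t₀,x₀)` along which `u_k` is `G`-Lipschitz, and `γ_k → γ` uniformly on `[a,b]`,
then `γ` is a characteristic of `u` and `t ↦ u(t, γ(t))` is `G`-Lipschitz. -/
theorem characteristic_limit_lipschitz
    (f : ℝ → ℝ) (hf : ContDiff ℝ 2 f)
    (a b : ℝ) (hab : a ≤ b) (t₀ x₀ : ℝ) (ht₀ : t₀ ∈ Icc a b)
    (G L : ℝ) (hG : 0 < G) (hL : 0 < L)
    (u : ℝ × ℝ → ℝ) (hu : Continuous u)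
    (uk : ℕ → ℝ × ℝ → ℝ) (huk : ∀ k, Continuous (uk k))
    (hconv : TendstoLocallyUniformly uk u atTop)
    (γk : ℕ → ℝ → ℝ) (γ : ℝ → ℝ)
    (hpt : ∀ k, γk k t₀ = x₀)
    (hchar : ∀ k, ∀ r ∈ Icc a b, ∀ s ∈ Icc a b,
      γk k r - γk k s = ∫ q in s..r, deriv f (uk k (q, γk k q)))
    (hLip : ∀ k, ∀ t ∈ Icc a b, ∀ s ∈ Icc a b,
      |uk k (t, γk k t) - uk k (s, γk k s)| ≤ G * |t - s|)
    (hγconv : TendstoUniformlyOn γk γ atTop (Icc a b)) :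
    (∀ r ∈ Icc a b, ∀ s ∈ Icc a b,
      γ r - γ s = ∫ q in s..r, deriv f (u (q, γ q))) ∧
    (∀ t ∈ Icc a b, ∀ s ∈ Icc a b,
      |u (t, γ t) - u (s, γ s)| ≤ G * |t - s|) := by
  have hderiv_cont : Continuous (deriv f) := hf.continuous_deriv one_le_two
  -- the composed functions along the curves are Lipschitz on `Icc a b`, hence continuous
  have hgkLip : ∀ k, LipschitzOnWith (Real.toNNReal G)
      (fun q => uk k (q, γk k q)) (Icc a b) := by
    intro k
    rw [lipschitzOnWith_iff_dist_le_mul]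
    intro x hx y hy
    rw [Real.dist_eq, Real.dist_eq, Real.coe_toNNReal _ hG.le]
    exact hLip k x hx y hy
  have hFkcont : ∀ k, ContinuousOn (fun q => deriv f (uk k (q, γk k q))) (Icc a b) :=
    fun k => hderiv_cont.comp_continuousOn (hgkLip k).continuousOn
  -- pointwise convergence of `uk k (q, γk k q)` to `u (q, γ q)` on `Icc a b`
  have hlim : ∀ q ∈ Icc a b,
      Tendsto (fun k => uk k (q, γk k q)) atTop (𝓝 (u (q, γ q))) := by
    intro q hq
    exact hconv.tendsto_comp hu.continuousAt
      (tendsto_const_nhds.prodMk_nhds (hγconv.tendsto_at hq))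
  -- a uniform bound `M1` for `γ` on `Icc a b`
  obtain ⟨k₀, hk₀⟩ : ∃ k₀, ∀ q ∈ Icc a b, dist (γ q) (γk k₀ q) < 1 := by
    have := (Metric.tendstoUniformlyOn_iff.mp hγconv) 1 one_pos
    exact this.exists
  obtain ⟨C, hC⟩ := isCompact_Icc.exists_bound_of_continuousOn (hFkcont k₀)
  have hC0 : 0 ≤ C := le_trans (norm_nonneg _) (hC t₀ ht₀)
  set M1 : ℝ := |x₀| + C * (b - a) + 1 with hM1
  have hM1' : 0 ≤ M1 := by
    have := mul_nonneg hC0 (sub_nonneg.mpr hab)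
    have := abs_nonneg x₀
    linarith
  have hγbound : ∀ q ∈ Icc a b, |γ q| ≤ M1 := by
    intro q hq
    have hsub : Set.uIoc t₀ q ⊆ Icc a b :=
      Set.uIoc_subset_uIcc.trans (uIcc_subset_Icc ht₀ hq)
    have h1 : |γk k₀ q - x₀| ≤ C * (b - a) := by
      rw [← hpt k₀, hchar k₀ q hq t₀ ht₀]
      calc ‖∫ p in t₀..q, deriv f (uk k₀ (p, γk k₀ p))‖
          ≤ C * |q - t₀| :=
            intervalIntegral.norm_integral_le_of_norm_le_const fun x hx => hC x (hsub hx)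
        _ ≤ C * (b - a) := by
            apply mul_le_mul_of_nonneg_left _ hC0
            rw [abs_sub_le_iff]
            constructor <;> linarith [hq.1, hq.2, ht₀.1, ht₀.2]
    have h2 : |γ q - γk k₀ q| < 1 := by
      rw [← Real.dist_eq]; exact hk₀ q hq
    have t1 : |γ q| - |γk k₀ q| ≤ |γ q - γk k₀ q| := abs_sub_abs_le_abs_sub _ _
    have t2 : |γk k₀ q| - |x₀| ≤ |γk k₀ q - x₀| := abs_sub_abs_le_abs_sub _ _
    rw [hM1]; linarith
  -- the compact set containing the graphs of all (eventual) curves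
  set K : Set (ℝ × ℝ) := Icc a b ×ˢ Icc (-(M1 + 1)) (M1 + 1) with hKdef
  have hK : IsCompact K := isCompact_Icc.prod isCompact_Icc
  obtain ⟨M2, hM2⟩ := hK.exists_bound_of_continuousOn hu.continuousOn
  have hM2' : 0 ≤ M2 := le_trans (norm_nonneg _) (hM2 (t₀, 0)
    ⟨ht₀, by simp only [mem_Icc]; constructor <;> linarith⟩)
  obtain ⟨M3, hM3⟩ := isCompact_Icc.exists_bound_of_continuousOn
    (s := Icc (-(M2 + 1)) (M2 + 1)) hderiv_cont.continuousOn
  -- the eventual bound on the integrands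
  have hEv : ∀ᶠ k in atTop, ∀ q ∈ Icc a b,
      ‖deriv f (uk k (q, γk k q))‖ ≤ M3 := by
    have h1 : ∀ᶠ k in atTop, ∀ q ∈ Icc a b, dist (γ q) (γk k q) < 1 :=
      (Metric.tendstoUniformlyOn_iff.mp hγconv) 1 one_pos
    have h2 : ∀ᶠ k in atTop, ∀ p ∈ K, dist (u p) (uk k p) < 1 :=
      (Metric.tendstoUniformlyOn_iff.mp (tendstoLocallyUniformly_iff_forall_isCompact.mp hconv K hK))
        1 one_pos
    filter_upwards [h1, h2] with k hk1 hk2 q hq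
    have hmem : (q, γk k q) ∈ K := by
      have hd := hk1 q hq
      rw [Real.dist_eq] at hd
      obtain ⟨l1, r1⟩ := abs_le.mp (hγbound q hq)
      obtain ⟨l2, r2⟩ := abs_lt.mp hd
      exact ⟨hq, mem_Icc.mpr ⟨by linarith, by linarith⟩⟩
    have huval : |uk k (q, γk k q)| ≤ M2 + 1 := by
      have h := hk2 _ hmem
      rw [Real.dist_eq] at h
      have hn := hM2 _ hmem
      rw [Real.norm_eq_abs] at hn
      obtain ⟨l1, r1⟩ := abs_le.mp hn
      obtain ⟨l2, r2⟩ := abs_lt.mp h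
      rw [abs_le]; exact ⟨by linarith, by linarith⟩
    exact hM3 _ (mem_Icc.mpr (abs_le.mp huval))
  constructor
  · intro r hr s hs
    have hsub : Set.uIoc s r ⊆ Icc a b := fun x hx =>
      (uIcc_subset_Icc hs hr) (uIoc_subset_uIcc hx)
    have htend1 : Tendsto (fun k => γk k r - γk k s) atTop (𝓝 (γ r - γ s)) :=
      (hγconv.tendsto_at hr).sub (hγconv.tendsto_at hs)
    have htend2 : Tendsto (fun k => ∫ q in s..r, deriv f (uk k (q, γk k q))) atTop
        (𝓝 (∫ q in s..r, deriv f (u (q, γ q)))) := by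
      apply intervalIntegral.tendsto_integral_filter_of_dominated_convergence (fun _ => M3)
      · exact Eventually.of_forall fun k =>
          (((hFkcont k).mono hsub).aestronglyMeasurable measurableSet_uIoc)
      · filter_upwards [hEv] with k hk
        exact MeasureTheory.ae_of_all _ fun q hq => hk q (hsub hq)
      · exact intervalIntegrable_const
      · exact MeasureTheory.ae_of_all _ fun q hq =>
          (hderiv_cont.tendsto _).comp (hlim q (hsub hq))
    have := tendsto_nhds_unique
      (htend1.congr (fun k => hchar k r hr s hs)) htend2
    exact this
  · intro t ht s hs
    have htend : Tendsto (fun k => |uk k (t, γk k t) - uk k (s, γk k s)|) atTop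
        (𝓝 (|u (t, γ t) - u (s, γ s)|)) :=
      ((hlim t ht).sub (hlim s hs)).abs
    exact le_of_tendsto htend (Eventually.of_forall fun k => hLip k t ht s hs)
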